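/- The pullback of the flat neutral metric ds² = dZ₁dZ̄₁ - dZ₂dZ̄₂ on ℂ² under the map (μ₁, μ₂) ↦ (Z₁, Z₂), where Z₁ = [(1+μ₂μ̄₂)μ̄₁ + (1+μ₁μ̄₁)μ̄₂ + i((1-μ₂μ̄₂)μ̄₁ - (1-μ₁μ̄₁)μ̄₂)]/(1-μ₁μ̄₁μ₂μ̄₂) and Z₂ = [(1+μ₂μ̄₂)μ̄₁ + (1+μ₁μ̄₁)μ̄₂ - i((1-μ₂μ̄₂)μ̄₁ - (1-μ₁μ̄₁)μ̄₂)]/(1-μ₁μ̄₁μ₂μ̄₂), equals Ω² times the canonical neutral metric on the space of oriented geodesics of hyperbolic 3-space, where Ω = |1+μ₁μ̄₂|²/(1-|μ₁|²|μ₂|²). -/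

import Mathlib

set_option maxHeartbeats 2000000
set_option maxRecDepth 100000

open Complex

/-- The conformal coordinate map `(μ₁,μ₂) ↦ (Z₁,Z₂)` on the space of oriented geodesics
of hyperbolic 3-space. -/
noncomputable def geodCoord (μ : ℂ × ℂ) : ℂ × ℂ :=
  let m₁ := μ.1; let m₂ := μ.2
  let den : ℂ := 1 - m₁ * (starRingEnd ℂ) m₁ * m₂ * (starRingEnd ℂ) m₂
  let a : ℂ := (1 + m₂ * (starRingEnd ℂ) m₂) * (starRingEnd ℂ) m₁
    + (1 + m₁ * (starRingEnd ℂ) m₁) * (starRingEnd ℂ) m₂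
  let b : ℂ := (1 - m₂ * (starRingEnd ℂ) m₂) * (starRingEnd ℂ) m₁
    - (1 - m₁ * (starRingEnd ℂ) m₁) * (starRingEnd ℂ) m₂
  ((a + I * b) / den, (a - I * b) / den)

/-- The canonical neutral metric `G̃` on the space of oriented geodesics of `ℍ³`, as a
quadratic form on the tangent space at `μ = (μ₁,μ₂)`:
`G̃(v) = Im(8 v₁ v̄₂ / (1+μ₁μ̄₂)²)`. -/
noncomputable def Gtilde (μ : ℂ × ℂ) (v : ℂ × ℂ) : ℝ :=
  (8 * v.1 * (starRingEnd ℂ) v.2 / (1 + μ.1 * (starRingEnd ℂ) μ.2) ^ 2).im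

/-- The conformal factor `Ω = |1+μ₁μ̄₂|²/(1 − |μ₁|²|μ₂|²)`. -/
noncomputable def confFactor (μ : ℂ × ℂ) : ℝ :=
  Complex.normSq (1 + μ.1 * (starRingEnd ℂ) μ.2) /
    (1 - ‖μ.1‖ ^ 2 * ‖μ.2‖ ^ 2)

/-- The pullback of the flat neutral metric `dZ₁dZ̄₁ − dZ₂dZ̄₂` on `ℂ²` under the map
`(μ₁,μ₂) ↦ (Z₁,Z₂)` equals `Ω²` times the canonical neutral metric `G̃` on the space of
oriented geodesics of hyperbolic 3-space, where `Ω = |1+μ₁μ̄₂|²/(1−|μ₁|²|μ₂|²)`. -/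
theorem pullback_flat_eq_conf_neutral
    (μ : ℂ × ℂ) (h : ‖μ.1‖ * ‖μ.2‖ < 1) (v : ℂ × ℂ) :
    Complex.normSq ((fderiv ℝ geodCoord μ v).1)
      - Complex.normSq ((fderiv ℝ geodCoord μ v).2)
    = (confFactor μ) ^ 2 * Gtilde μ v := by

  have hgeod : geodCoord = fun p : ℂ × ℂ =>
      ((((1 + p.2 * (starRingEnd ℂ) p.2) * (starRingEnd ℂ) p.1
          + (1 + p.1 * (starRingEnd ℂ) p.1) * (starRingEnd ℂ) p.2)
        + I * ((1 - p.2 * (starRingEnd ℂ) p.2) * (starRingEnd ℂ) p.1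
          - (1 - p.1 * (starRingEnd ℂ) p.1) * (starRingEnd ℂ) p.2))
        * ((1 : ℂ) - p.1 * (starRingEnd ℂ) p.1 * p.2 * (starRingEnd ℂ) p.2)⁻¹,
       (((1 + p.2 * (starRingEnd ℂ) p.2) * (starRingEnd ℂ) p.1
          + (1 + p.1 * (starRingEnd ℂ) p.1) * (starRingEnd ℂ) p.2)
        - I * ((1 - p.2 * (starRingEnd ℂ) p.2) * (starRingEnd ℂ) p.1
          - (1 - p.1 * (starRingEnd ℂ) p.1) * (starRingEnd ℂ) p.2))
        * ((1 : ℂ) - p.1 * (starRingEnd ℂ) p.1 * p.2 * (starRingEnd ℂ) p.2)⁻¹) := by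
    funext p; simp [geodCoord, div_eq_mul_inv]
  have hs : (0:ℝ) ≤ ‖μ.1‖ * ‖μ.2‖ :=
    mul_nonneg (norm_nonneg _) (norm_nonneg _)
  have key : μ.1 * (starRingEnd ℂ) μ.1 * μ.2 * (starRingEnd ℂ) μ.2
      = (((‖μ.1‖ * ‖μ.2‖) ^ 2 : ℝ) : ℂ) := by
    have : μ.1 * (starRingEnd ℂ) μ.1 * μ.2 * (starRingEnd ℂ) μ.2
        = (μ.1 * (starRingEnd ℂ) μ.1) * (μ.2 * (starRingEnd ℂ) μ.2) := by ring
    rw [this, Complex.mul_conj, Complex.mul_conj, Complex.normSq_eq_norm_sq,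
      Complex.normSq_eq_norm_sq]
    push_cast; ring
  have hden0 : ((1 : ℂ) - μ.1 * (starRingEnd ℂ) μ.1 * μ.2 * (starRingEnd ℂ) μ.2) ≠ 0 := by
    rw [key, ← Complex.ofReal_one, ← Complex.ofReal_sub]
    simp only [ne_eq, Complex.ofReal_eq_zero]
    nlinarith
  have hq1 : (1 : ℂ) + μ.1 * (starRingEnd ℂ) μ.2 ≠ 0 := by
    intro hq
    have h1 : μ.1 * (starRingEnd ℂ) μ.2 = -1 := by linear_combination hq
    have h2 : ‖μ.1 * (starRingEnd ℂ) μ.2‖ = 1 := by rw [h1]; simp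
    rw [norm_mul, Complex.norm_conj] at h2
    linarith
  have hq2 : (1 : ℂ) + (starRingEnd ℂ) μ.1 * μ.2 ≠ 0 := by
    intro hq
    apply hq1
    have := congrArg (starRingEnd ℂ) hq
    simpa using this
  -- derivative pieces
  have hm1 : HasFDerivAt (fun p : ℂ × ℂ => p.1) (ContinuousLinearMap.fst ℝ ℂ ℂ) μ := hasFDerivAt_fst
  have hm2 : HasFDerivAt (fun p : ℂ × ℂ => p.2) (ContinuousLinearMap.snd ℝ ℂ ℂ) μ := hasFDerivAt_snd
  have hc1 : HasFDerivAt (fun p : ℂ × ℂ => (starRingEnd ℂ) p.1) _ μ :=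
    ((conjCLE : ℂ →L[ℝ] ℂ).hasFDerivAt).comp μ hm1
  have hc2 : HasFDerivAt (fun p : ℂ × ℂ => (starRingEnd ℂ) p.2) _ μ :=
    ((conjCLE : ℂ →L[ℝ] ℂ).hasFDerivAt).comp μ hm2
  have hden : HasFDerivAt (fun p : ℂ × ℂ =>
      (1 : ℂ) - p.1 * (starRingEnd ℂ) p.1 * p.2 * (starRingEnd ℂ) p.2) _ μ :=
    ((hasFDerivAt_const (1:ℂ) μ).sub (((hm1.mul hc1).mul hm2).mul hc2))
  have hinv : HasFDerivAt (fun p : ℂ × ℂ =>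
      ((1 : ℂ) - p.1 * (starRingEnd ℂ) p.1 * p.2 * (starRingEnd ℂ) p.2)⁻¹) _ μ :=
    ((hasFDerivAt_inv hden0).restrictScalars ℝ).comp μ hden
  have ha : HasFDerivAt (fun p : ℂ × ℂ =>
      (1 + p.2 * (starRingEnd ℂ) p.2) * (starRingEnd ℂ) p.1
        + (1 + p.1 * (starRingEnd ℂ) p.1) * (starRingEnd ℂ) p.2) _ μ :=
    (((hasFDerivAt_const (1:ℂ) μ).add (hm2.mul hc2)).mul hc1).add
      (((hasFDerivAt_const (1:ℂ) μ).add (hm1.mul hc1)).mul hc2)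
  have hb : HasFDerivAt (fun p : ℂ × ℂ =>
      (1 - p.2 * (starRingEnd ℂ) p.2) * (starRingEnd ℂ) p.1
        - (1 - p.1 * (starRingEnd ℂ) p.1) * (starRingEnd ℂ) p.2) _ μ :=
    (((hasFDerivAt_const (1:ℂ) μ).sub (hm2.mul hc2)).mul hc1).sub
      (((hasFDerivAt_const (1:ℂ) μ).sub (hm1.mul hc1)).mul hc2)
  have hZ1 : HasFDerivAt (fun p : ℂ × ℂ =>
      (((1 + p.2 * (starRingEnd ℂ) p.2) * (starRingEnd ℂ) p.1
          + (1 + p.1 * (starRingEnd ℂ) p.1) * (starRingEnd ℂ) p.2)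
        + I * ((1 - p.2 * (starRingEnd ℂ) p.2) * (starRingEnd ℂ) p.1
          - (1 - p.1 * (starRingEnd ℂ) p.1) * (starRingEnd ℂ) p.2))
        * ((1 : ℂ) - p.1 * (starRingEnd ℂ) p.1 * p.2 * (starRingEnd ℂ) p.2)⁻¹) _ μ :=
    (ha.add ((hasFDerivAt_const I μ).mul hb)).mul hinv
  have hZ2 : HasFDerivAt (fun p : ℂ × ℂ =>
      (((1 + p.2 * (starRingEnd ℂ) p.2) * (starRingEnd ℂ) p.1
          + (1 + p.1 * (starRingEnd ℂ) p.1) * (starRingEnd ℂ) p.2)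
        - I * ((1 - p.2 * (starRingEnd ℂ) p.2) * (starRingEnd ℂ) p.1
          - (1 - p.1 * (starRingEnd ℂ) p.1) * (starRingEnd ℂ) p.2))
        * ((1 : ℂ) - p.1 * (starRingEnd ℂ) p.1 * p.2 * (starRingEnd ℂ) p.2)⁻¹) _ μ :=
    (ha.sub ((hasFDerivAt_const I μ).mul hb)).mul hinv
  have H := hZ1.prodMk hZ2
  rw [hgeod, H.fderiv]
  simp only [ContinuousLinearMap.prod_apply, ContinuousLinearMap.add_apply,
    ContinuousLinearMap.sub_apply, ContinuousLinearMap.smul_apply,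
    ContinuousLinearMap.coe_comp', Function.comp_apply,
    ContinuousLinearMap.coe_fst', ContinuousLinearMap.coe_snd',
    ContinuousLinearMap.coe_restrictScalars', ContinuousLinearMap.smulRight_apply,
    ContinuousLinearMap.one_apply, ContinuousLinearMap.zero_apply,
    ContinuousLinearMap.neg_apply,
    Complex.conjCLE_apply, smul_eq_mul, zero_sub, zero_add,
    ContinuousLinearEquiv.coe_coe, Pi.mul_apply, Pi.add_apply, Pi.sub_apply,
    ContinuousLinearMap.toSpanSingleton_apply]
  have hde : ((1 - ‖μ.1‖ ^ 2 * ‖μ.2‖ ^ 2 : ℝ) : ℂ)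
      = 1 - μ.1 * (starRingEnd ℂ) μ.1 * μ.2 * (starRingEnd ℂ) μ.2 := by
    rw [key]; push_cast; ring
  have him : ∀ w : ℂ, (w.im : ℂ) = (w - (starRingEnd ℂ) w) / (2 * I) := by
    intro w
    rw [Complex.sub_conj, eq_div_iff (by simp [Complex.I_ne_zero] : (2 * I : ℂ) ≠ 0)]
    push_cast; ring
  apply Complex.ofReal_injective
  simp only [Gtilde, confFactor]
  push_cast [him, hde]
  rw [← Complex.mul_conj, ← Complex.mul_conj, ← Complex.mul_conj]
  simp only [map_add, map_sub, map_mul, map_inv₀, map_div₀, map_neg, map_one, map_pow,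
    Complex.conj_conj, Complex.conj_I, map_ofNat]
  have hcden : (1:ℂ) - (starRingEnd ℂ) μ.1 * μ.1 * (starRingEnd ℂ) μ.2 * μ.2
      = 1 - μ.1 * (starRingEnd ℂ) μ.1 * μ.2 * (starRingEnd ℂ) μ.2 := by ring
  rw [hcden]
  set d : ℂ := 1 - μ.1 * (starRingEnd ℂ) μ.1 * μ.2 * (starRingEnd ℂ) μ.2 with hd
  field_simp [hden0, hq1, hq2, Complex.I_ne_zero, map_zero,
    (by rwa [mul_comm] : (1:ℂ) + (starRingEnd ℂ) μ.2 * μ.1 ≠ 0),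
    (by rwa [mul_comm] : (1:ℂ) + μ.2 * (starRingEnd ℂ) μ.1 ≠ 0)]
  simp only [map_zero]
  rw [hd]
  have h2 : (I:ℂ)^2 = -1 := Complex.I_sq
  have h3 : (I:ℂ)^3 = -I := by linear_combination I * h2
  have h4 : (I:ℂ)^4 = 1 := by linear_combination (I^2 - 1) * h2
  have h5 : (I:ℂ)^5 = I := by linear_combination (I^3 - I) * h2
  have h6 : (I:ℂ)^6 = -1 := by linear_combination (I^4 - I^2 + 1) * h2
  have h7 : (I:ℂ)^7 = -I := by linear_combination (I^5 - I^3 + I) * h2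
  have h8 : (I:ℂ)^8 = 1 := by linear_combination (I^6 - I^4 + I^2 - 1) * h2
  ring_nf
  simp only [h2, h3, h4, h5, h6, h7, h8]
  ring
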